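/- Let p be a prime, K the algebraic closure of 𝔽_p, and V an n-dimensional K-vector space with n ≥ 1. Let x and y be invertible linear endomorphisms of V such that the subgroup ⟨x,y⟩ of GL(V) acts irreducibly on V (the only ⟨x,y⟩-invariant subspaces of V are 0 and V) and ⟨x,y⟩ ≠ 1. Then there exists z ∈ {x, y, xy} such that 3·dim ker(z − 1) ≤ n, i.e. the fixed-point subspace C_V(z) has dimension at most n/3. -/

import Mathlib

open Module LinearMap

lemma scott_inv_mem_of_mem {K V : Type*} [Field K] [AddCommGroup V] [Module K V]
    [FiniteDimensional K V] (g : LinearMap.GeneralLinearGroup K V) (W : Submodule K V)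
    (h : ∀ v ∈ W, (g : Module.End K V) v ∈ W) :
    ∀ v ∈ W, ((g⁻¹ : LinearMap.GeneralLinearGroup K V) : Module.End K V) v ∈ W := by
  have hmap : W.map ((LinearMap.GeneralLinearGroup.toLinearEquiv g : V ≃ₗ[K] V) : V →ₗ[K] V)
      = W := by
    apply Submodule.eq_of_le_of_finrank_le
    · rintro v ⟨u, hu, rfl⟩
      exact h u hu
    · rw [LinearEquiv.finrank_map_eq]
  intro v hv
  rw [← hmap] at hv
  obtain ⟨u, hu, rfl⟩ := hv
  have key : ((g⁻¹ : LinearMap.GeneralLinearGroup K V) : Module.End K V)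
      ((g : Module.End K V) u) = u := by
    rw [← Module.End.mul_apply, ← Units.val_mul, inv_mul_cancel]
    rfl
  have : ((LinearMap.GeneralLinearGroup.toLinearEquiv g : V ≃ₗ[K] V) : V →ₗ[K] V) u
      = (g : Module.End K V) u := rfl
  rw [this, key]
  exact hu



/-- Lemma 5.4 (consequence of Scott's lemma): if `x, y` generate an irreducible nontrivial
subgroup of `GL(V)` where `V` is an `n`-dimensional vector space over `K = 𝔽̄_p`, then one
of `x`, `y`, `xy` has fixed-point space of dimension at most `n/3`. -/
theorem scott_lemma_consequence (p : ℕ) [Fact p.Prime] (n : ℕ) (hn : 1 ≤ n)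
    (V : Type*) [AddCommGroup V] [Module (AlgebraicClosure (ZMod p)) V]
    [FiniteDimensional (AlgebraicClosure (ZMod p)) V]
    (hdim : Module.finrank (AlgebraicClosure (ZMod p)) V = n)
    (x y : LinearMap.GeneralLinearGroup (AlgebraicClosure (ZMod p)) V)
    (hirr : ∀ W : Submodule (AlgebraicClosure (ZMod p)) V,
      (∀ g ∈ Subgroup.closure ({x, y} :
          Set (LinearMap.GeneralLinearGroup (AlgebraicClosure (ZMod p)) V)),
        ∀ v ∈ W, (g : Module.End (AlgebraicClosure (ZMod p)) V) v ∈ W) →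
      W = ⊥ ∨ W = ⊤)
    (hne : Subgroup.closure ({x, y} :
        Set (LinearMap.GeneralLinearGroup (AlgebraicClosure (ZMod p)) V)) ≠ ⊥) :
    ∃ z ∈ ({x, y, x * y} :
        Set (LinearMap.GeneralLinearGroup (AlgebraicClosure (ZMod p)) V)),
      3 * Module.finrank (AlgebraicClosure (ZMod p))
          (LinearMap.ker ((z : Module.End (AlgebraicClosure (ZMod p)) V) - 1)) ≤ n := by
  set K := AlgebraicClosure (ZMod p)
  set X : Module.End K V := (x : Module.End K V) with hX
  set Y : Module.End K V := (y : Module.End K V) with hY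
  -- nontriviality: not both x and y are 1
  have hne' : ¬ (X = 1 ∧ Y = 1) := by
    rintro ⟨hx1, hy1⟩
    apply hne
    rw [Subgroup.closure_eq_bot_iff]
    rintro g (rfl | rfl) <;> simp only [Set.mem_singleton_iff] <;> ext1 <;> assumption
  -- The submodule W = im(X-1) ⊔ im(Y-1) is invariant, hence ⊤
  set W : Submodule K V := LinearMap.range (X - 1) ⊔ LinearMap.range (Y - 1) with hWdef
  have hWx : ∀ v ∈ W, X v ∈ W := by
    intro v hv
    have : X v = (X - 1) v + v := by simp [LinearMap.sub_apply]
    rw [this]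
    exact W.add_mem (Submodule.mem_sup_left (LinearMap.mem_range_self _ v)) hv
  have hWy : ∀ v ∈ W, Y v ∈ W := by
    intro v hv
    have : Y v = (Y - 1) v + v := by simp [LinearMap.sub_apply]
    rw [this]
    exact W.add_mem (Submodule.mem_sup_right (LinearMap.mem_range_self _ v)) hv
  have hWinv : ∀ g ∈ Subgroup.closure ({x, y} :
      Set (LinearMap.GeneralLinearGroup K V)),
      ∀ v ∈ W, (g : Module.End K V) v ∈ W := by
    intro g hg
    induction hg using Subgroup.closure_induction with
    | mem g hg => rcases hg with rfl | rfl
                  · exact hWx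
                  · exact hWy
    | one => intro v hv; simpa using hv
    | mul a b _ _ ha hb =>
        intro v hv
        have : ((a * b : LinearMap.GeneralLinearGroup K V) : Module.End K V) v
            = (a : Module.End K V) ((b : Module.End K V) v) := by
          rw [Units.val_mul, Module.End.mul_apply]
        rw [this]
        exact ha _ (hb v hv)
    | inv a _ ha => exact scott_inv_mem_of_mem a W ha
  have hWtop : W = ⊤ := by
    rcases hirr W hWinv with hbot | htop
    · exfalso
      apply hne'
      have h1 : LinearMap.range (X - 1) = ⊥ := by
        rw [eq_bot_iff]; exact le_trans le_sup_left hbot.le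
      have h2 : LinearMap.range (Y - 1) = ⊥ := by
        rw [eq_bot_iff]; exact le_trans le_sup_right hbot.le
      rw [LinearMap.range_eq_bot] at h1 h2
      constructor
      · have := sub_eq_zero.mp h1; exact this
      · have := sub_eq_zero.mp h2; exact this
    · exact htop
  -- The submodule U = ker(X-1) ⊓ ker(Y-1) is invariant, hence ⊥
  set U : Submodule K V := LinearMap.ker (X - 1) ⊓ LinearMap.ker (Y - 1) with hUdef
  have hUx : ∀ v ∈ U, X v ∈ U := by
    intro v hv
    have hxv : X v = v := by
      have := (Submodule.mem_inf.mp hv).1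
      rw [LinearMap.mem_ker, LinearMap.sub_apply, sub_eq_zero] at this
      simpa using this
    rw [hxv]; exact hv
  have hUy : ∀ v ∈ U, Y v ∈ U := by
    intro v hv
    have hyv : Y v = v := by
      have := (Submodule.mem_inf.mp hv).2
      rw [LinearMap.mem_ker, LinearMap.sub_apply, sub_eq_zero] at this
      simpa using this
    rw [hyv]; exact hv
  have hUinv : ∀ g ∈ Subgroup.closure ({x, y} :
      Set (LinearMap.GeneralLinearGroup K V)),
      ∀ v ∈ U, (g : Module.End K V) v ∈ U := by
    intro g hg
    induction hg using Subgroup.closure_induction with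
    | mem g hg => rcases hg with rfl | rfl
                  · exact hUx
                  · exact hUy
    | one => intro v hv; simpa using hv
    | mul a b _ _ ha hb =>
        intro v hv
        have : ((a * b : LinearMap.GeneralLinearGroup K V) : Module.End K V) v
            = (a : Module.End K V) ((b : Module.End K V) v) := by
          rw [Units.val_mul, Module.End.mul_apply]
        rw [this]
        exact ha _ (hb v hv)
    | inv a _ ha => exact scott_inv_mem_of_mem a U ha
  have hUbot : U = ⊥ := by
    rcases hirr U hUinv with hbot | htop
    · exact hbot
    · exfalso
      apply hne'
      have h1 : LinearMap.ker (X - 1) = ⊤ := top_unique (htop.ge.trans inf_le_left)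
      have h2 : LinearMap.ker (Y - 1) = ⊤ := top_unique (htop.ge.trans inf_le_right)
      rw [LinearMap.ker_eq_top] at h1 h2
      exact ⟨sub_eq_zero.mp h1, sub_eq_zero.mp h2⟩
  -- the surjection E : V × V → V
  set E : V × V →ₗ[K] V :=
    (X - 1).comp (LinearMap.fst K V V) + (X * (Y - 1)).comp (LinearMap.snd K V V) with hEdef
  have hE_apply : ∀ u v : V, E (u, v) = (X - 1) u + X ((Y - 1) v) := by
    intro u v
    simp [hEdef, Module.End.mul_apply]
  have hErange : LinearMap.range E = ⊤ := by
    rw [eq_top_iff, ← hWtop, hWdef, sup_le_iff]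
    constructor
    · rintro _ ⟨u, rfl⟩
      exact ⟨(u, 0), by rw [hE_apply]; simp⟩
    · rintro _ ⟨v, rfl⟩
      refine ⟨(-((Y - 1) v), v), ?_⟩
      rw [hE_apply]
      simp only [LinearMap.sub_apply, Module.End.one_apply, map_neg, map_sub]
      abel
  have hkerE : finrank K ↥(LinearMap.ker E) = n := by
    have h1 := LinearMap.finrank_range_add_finrank_ker E
    rw [hErange, finrank_top, Module.finrank_prod, hdim] at h1
    omega
  -- the difference map π on ker E
  set π : ↥(LinearMap.ker E) →ₗ[K] V :=
    ((LinearMap.fst K V V) - (LinearMap.snd K V V)).comp (LinearMap.ker E).subtype with hπdef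
  have hπ_apply : ∀ w : ↥(LinearMap.ker E), π w = (w : V × V).1 - (w : V × V).2 := by
    intro w; simp [hπdef]
  have hπrn := LinearMap.finrank_range_add_finrank_ker π
  rw [hkerE] at hπrn
  -- lower bound on the kernel of π
  set Z : Module.End K V := X * Y with hZdef
  have hdiag : ∀ u : V, u ∈ LinearMap.ker (Z - 1) → ((u, u) : V × V) ∈ LinearMap.ker E := by
    intro u hu
    rw [LinearMap.mem_ker] at hu ⊢
    rw [hE_apply]
    rw [LinearMap.sub_apply, Module.End.mul_apply, Module.End.one_apply, sub_eq_zero] at hu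
    have expand : (X - 1) u + X ((Y - 1) u) = X (Y u) - u := by
      simp only [LinearMap.sub_apply, Module.End.one_apply, map_sub]
      abel
    rw [expand, hu, sub_self]
  set j : ↥(LinearMap.ker (Z - 1)) →ₗ[K] ↥(LinearMap.ker E) :=
    LinearMap.codRestrict (LinearMap.ker E)
      ((LinearMap.prod LinearMap.id LinearMap.id).comp (LinearMap.ker (Z - 1)).subtype)
      (fun u => hdiag u u.2) with hjdef
  have hjval : ∀ u : ↥(LinearMap.ker (Z - 1)), (j u : V × V) = ((u : V), (u : V)) := by
    intro u; rfl
  have hjπ : ∀ u, j u ∈ LinearMap.ker π := by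
    intro u
    rw [LinearMap.mem_ker, hπ_apply, hjval]
    simp
  set j' : ↥(LinearMap.ker (Z - 1)) →ₗ[K] ↥(LinearMap.ker π) :=
    LinearMap.codRestrict _ j hjπ with hj'def
  have hinj : Function.Injective j' := by
    intro a b hab
    have h1 : (j' a : ↥(LinearMap.ker E)) = (j' b : ↥(LinearMap.ker E)) := by rw [hab]
    have h2 : (j a : V × V) = (j b : V × V) := by
      have : (j a : ↥(LinearMap.ker E)) = j b := h1
      rw [this]
    rw [hjval, hjval] at h2
    exact Subtype.ext (congrArg Prod.fst h2)
  have hker_lb : finrank K ↥(LinearMap.ker (Z - 1)) ≤ finrank K ↥(LinearMap.ker π) :=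
    LinearMap.finrank_le_finrank_of_injective hinj
  -- lower bound on the range of π
  have hCx_le : LinearMap.ker (X - 1) ≤ LinearMap.range π := by
    intro u hu
    rw [LinearMap.mem_ker] at hu
    refine ⟨⟨(u, 0), ?_⟩, ?_⟩
    · rw [LinearMap.mem_ker, hE_apply, hu]
      simp
    · rw [hπ_apply]
      simp
  have hCy_le : LinearMap.ker (Y - 1) ≤ LinearMap.range π := by
    intro v hv
    rw [LinearMap.mem_ker] at hv
    refine ⟨⟨(0, -v), ?_⟩, ?_⟩
    · rw [LinearMap.mem_ker, hE_apply]
      rw [map_neg, hv]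
      simp
    · rw [hπ_apply]
      simp
  have hrange_lb : finrank K ↥(LinearMap.ker (X - 1)) + finrank K ↥(LinearMap.ker (Y - 1))
      ≤ finrank K ↥(LinearMap.range π) := by
    have hsum := Submodule.finrank_sup_add_finrank_inf_eq (LinearMap.ker (X - 1))
      (LinearMap.ker (Y - 1))
    rw [← hUdef, hUbot, finrank_bot, add_zero] at hsum
    rw [← hsum]
    exact Submodule.finrank_mono (sup_le hCx_le hCy_le)
  have hmain : finrank K ↥(LinearMap.ker (X - 1)) + finrank K ↥(LinearMap.ker (Y - 1))
      + finrank K ↥(LinearMap.ker (Z - 1)) ≤ n := by omega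
  by_cases h1 : 3 * finrank K ↥(LinearMap.ker (X - 1)) ≤ n
  · exact ⟨x, Or.inl rfl, h1⟩
  by_cases h2 : 3 * finrank K ↥(LinearMap.ker (Y - 1)) ≤ n
  · exact ⟨y, Or.inr (Or.inl rfl), h2⟩
  refine ⟨x * y, Or.inr (Or.inr rfl), ?_⟩
  have hcoe : ((x * y : LinearMap.GeneralLinearGroup K V) : Module.End K V) = Z := by
    rw [Units.val_mul]
  rw [hcoe]
  show 3 * finrank K ↥(LinearMap.ker (Z - 1)) ≤ n
  omega
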